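/- arXiv:1008.3445 — 2 statements merged into one kernel-verified Lean document; each statement's English description precedes it below -/
import Mathlib

section
/- Let f, θ, y be functions on a real interval with θ nonvanishing, such that θ'' = (f + m₁)θ and y'' = (f + m)y for constants m, m₁ with m ≠ m₁. Then u = y' - (θ'/θ)y satisfies u'' = (θ·(1/θ)'' - m₁ + m)u. -/
/-- Darboux's transformation: if `θ'' = (f + m₁)·θ` with `θ` nonvanishing and
`y'' = (f + m)·y` with `m ≠ m₁`, then `u = y' - (θ'/θ)·y` satisfies
`u'' = (θ·(1/θ)'' - m₁ + m)·u`. -/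
theorem darboux_transformation (I : Set ℝ) (hI : IsOpen I)
    (f θ y : ℝ → ℝ) (m m₁ : ℝ) (hm : m ≠ m₁)
    (hf : DifferentiableOn ℝ f I)
    (hθ : ContDiffOn ℝ 2 θ I) (hy : ContDiffOn ℝ 2 y I)
    (hθne : ∀ x ∈ I, θ x ≠ 0)
    (hθeq : ∀ x ∈ I, deriv (deriv θ) x = (f x + m₁) * θ x)
    (hyeq : ∀ x ∈ I, deriv (deriv y) x = (f x + m) * y x) :
    ∀ x ∈ I,
      deriv (deriv (fun t => deriv y t - (deriv θ t / θ t) * y t)) x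
        = (θ x * deriv (deriv (fun t => 1 / θ t)) x - m₁ + m)
            * (deriv y x - (deriv θ x / θ x) * y x) := by
  have hθd : ∀ t ∈ I, HasDerivAt θ (deriv θ t) t := fun t ht =>
    ((hθ.differentiableOn (by norm_num) t ht).differentiableAt (hI.mem_nhds ht)).hasDerivAt
  have hyd : ∀ t ∈ I, HasDerivAt y (deriv y t) t := fun t ht =>
    ((hy.differentiableOn (by norm_num) t ht).differentiableAt (hI.mem_nhds ht)).hasDerivAt
  have hθ' : ContDiffOn ℝ 1 (deriv θ) I := hθ.deriv_of_isOpen hI (by norm_num)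
  have hy' : ContDiffOn ℝ 1 (deriv y) I := hy.deriv_of_isOpen hI (by norm_num)
  have hθd2 : ∀ t ∈ I, HasDerivAt (deriv θ) ((f t + m₁) * θ t) t := fun t ht => by
    rw [← hθeq t ht]
    exact ((hθ'.differentiableOn one_ne_zero t ht).differentiableAt (hI.mem_nhds ht)).hasDerivAt
  have hyd2 : ∀ t ∈ I, HasDerivAt (deriv y) ((f t + m) * y t) t := fun t ht => by
    rw [← hyeq t ht]
    exact ((hy'.differentiableOn one_ne_zero t ht).differentiableAt (hI.mem_nhds ht)).hasDerivAt
  -- first derivative of u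
  have key1 : ∀ t ∈ I, deriv (fun s => deriv y s - deriv θ s / θ s * y s) t
      = (m - m₁) * y t - deriv θ t / θ t * (deriv y t - deriv θ t / θ t * y t) := by
    intro t ht
    have htne := hθne t ht
    have h1 : HasDerivAt (fun s => deriv y s - deriv θ s / θ s * y s)
        ((f t + m) * y t - ((((f t + m₁) * θ t) * θ t - deriv θ t * deriv θ t) / θ t ^ 2 * y t
          + deriv θ t / θ t * deriv y t)) t :=
      (hyd2 t ht).sub (((hθd2 t ht).div (hθd t ht) htne).mul (hyd t ht))
    rw [h1.deriv]
    field_simp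
    ring
  -- first derivative of 1/θ
  have key2 : ∀ t ∈ I, deriv (fun s => 1 / θ s) t = -deriv θ t / θ t ^ 2 := by
    intro t ht
    have h2 : HasDerivAt (fun s => 1 / θ s) ((0 * θ t - 1 * deriv θ t) / θ t ^ 2) t :=
      (hasDerivAt_const t (1 : ℝ)).div (hθd t ht) (hθne t ht)
    rw [h2.deriv]; ring
  intro x hx
  have hxne := hθne x hx
  -- second derivative of 1/θ at x
  have e2 : deriv (fun s => 1 / θ s) =ᶠ[nhds x] fun s => -deriv θ s / θ s ^ 2 :=
    Filter.eventually_of_mem (hI.mem_nhds hx) key2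
  have hdd1 : deriv (deriv (fun s => 1 / θ s)) x = deriv (fun s => -deriv θ s / θ s ^ 2) x :=
    e2.deriv_eq
  have hden : HasDerivAt (fun s => θ s ^ 2) (2 * θ x * deriv θ x) x := by
    have := (hθd x hx).pow 2
    simpa [mul_comm, Pi.pow_def] using this
  have h2 : HasDerivAt (fun s => -deriv θ s / θ s ^ 2)
      ((-((f x + m₁) * θ x) * θ x ^ 2 - -deriv θ x * (2 * θ x * deriv θ x)) / (θ x ^ 2) ^ 2) x :=
    ((hθd2 x hx).neg).div hden (pow_ne_zero 2 hxne)
  -- second derivative of u at x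
  have e1 : deriv (fun s => deriv y s - deriv θ s / θ s * y s) =ᶠ[nhds x]
      fun s => (m - m₁) * y s - deriv θ s / θ s * (deriv y s - deriv θ s / θ s * y s) :=
    Filter.eventually_of_mem (hI.mem_nhds hx) key1
  have hdd2 : deriv (deriv (fun s => deriv y s - deriv θ s / θ s * y s)) x
      = deriv (fun s => (m - m₁) * y s
          - deriv θ s / θ s * (deriv y s - deriv θ s / θ s * y s)) x := e1.deriv_eq
  have hg : HasDerivAt (fun s => deriv θ s / θ s)
      (((f x + m₁) * θ x * θ x - deriv θ x * deriv θ x) / θ x ^ 2) x :=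
    (hθd2 x hx).div (hθd x hx) hxne
  have hu : HasDerivAt (fun s => deriv y s - deriv θ s / θ s * y s)
      ((f x + m) * y x - (((f x + m₁) * θ x * θ x - deriv θ x * deriv θ x) / θ x ^ 2 * y x
        + deriv θ x / θ x * deriv y x)) x :=
    (hyd2 x hx).sub (hg.mul (hyd x hx))
  have h3 : HasDerivAt (fun s => (m - m₁) * y s
        - deriv θ s / θ s * (deriv y s - deriv θ s / θ s * y s))
      ((m - m₁) * deriv y x
        - (((f x + m₁) * θ x * θ x - deriv θ x * deriv θ x) / θ x ^ 2
            * (deriv y x - deriv θ x / θ x * y x)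
          + deriv θ x / θ x
            * ((f x + m) * y x - (((f x + m₁) * θ x * θ x - deriv θ x * deriv θ x) / θ x ^ 2 * y x
                + deriv θ x / θ x * deriv y x)))) x :=
    ((hyd x hx).const_mul (m - m₁)).sub (hg.mul hu)
  rw [hdd2, h3.deriv, hdd1, h2.deriv]
  field_simp
  ring
end

section
/- Let Q(x) = x⁴ + q₃x³ + q₂x² + q₁x + q₀ - λ be written via completing squares as (x² + a₁x + a₀)² + b₁x + b₀. If P is a monic polynomial satisfying P'' - 2(x² + a₁x + a₀)P' - (2x + a₁ + b₁x + b₀)P = 0, then Ψ(x) = P(x)·e^{-(x³/3 + a₁x²/2 + a₀x)} satisfies Ψ'' = Q(x)·Ψ. -/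
/-- Quartic anharmonic oscillator: with `x⁴+q₃x³+q₂x²+q₁x+q₀-λ = (x²+a₁x+a₀)² + b₁x + b₀`
via completing squares, if the polynomial function `P` satisfies
`P'' - 2(x²+a₁x+a₀)P' - (2x + a₁ + b₁x + b₀)P = 0`, then
`Ψ = P·e^{-(x³/3 + a₁x²/2 + a₀x)}` satisfies `Ψ'' = (x⁴+q₃x³+q₂x²+q₁x+q₀-λ)·Ψ`. -/
theorem quartic_anharmonic (q₀ q₁ q₂ q₃ lam a₀ a₁ b₀ b₁ : ℂ)
    (ha₁ : a₁ = q₃ / 2) (ha₀ : a₀ = q₂ / 2 - a₁ ^ 2 / 2)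
    (hb₁ : b₁ = q₁ - 2 * a₀ * a₁) (hb₀ : b₀ = q₀ - a₀ ^ 2 - lam)
    (P : ℝ → ℂ) (hP : ContDiff ℝ 2 P)
    (hPode : ∀ x : ℝ,
      deriv (deriv P) x - 2 * ((x : ℂ) ^ 2 + a₁ * x + a₀) * deriv P x
        - (2 * (x : ℂ) + a₁ + b₁ * x + b₀) * P x = 0)
    (Ψ : ℝ → ℂ)
    (hΨ : Ψ = fun x : ℝ =>
      P x * Complex.exp (-((x : ℂ) ^ 3 / 3 + a₁ * (x : ℂ) ^ 2 / 2 + a₀ * x))) :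
    ∀ x : ℝ,
      deriv (deriv Ψ) x
        = ((x : ℂ) ^ 4 + q₃ * (x : ℂ) ^ 3 + q₂ * (x : ℂ) ^ 2 + q₁ * x + q₀ - lam)
            * Ψ x := by
  subst hΨ
  set E : ℝ → ℂ := fun t : ℝ => Complex.exp (-((t : ℂ) ^ 3 / 3 + a₁ * (t : ℂ) ^ 2 / 2 + a₀ * t)) with hE
  have hEder : ∀ y : ℝ, HasDerivAt E (-((y : ℂ) ^ 2 + a₁ * y + a₀) * E y) y := by
    intro y
    have h1 : HasDerivAt (fun z : ℂ => -(z ^ 3 / 3 + a₁ * z ^ 2 / 2 + a₀ * z))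
        (-((y : ℂ) ^ 2 + a₁ * y + a₀)) (y : ℂ) := by
      have := ((((hasDerivAt_pow 3 (y : ℂ)).div_const 3).add
        (((hasDerivAt_pow 2 (y : ℂ)).const_mul a₁).div_const 2)).add
        ((hasDerivAt_id (y : ℂ)).const_mul a₀)).neg
      convert this using 1
      · rfl
      · rfl
      · funext z; simp
      · norm_num; ring
    have h2 := (h1.cexp).comp_ofReal
    convert h2 using 1
    ring
  have hP1 : Differentiable ℝ P := hP.differentiable (by norm_num)
  have hP2 : Differentiable ℝ (deriv P) := by
    have h : ContDiff ℝ ((1 : ℕ∞) + 1) P := by exact_mod_cast hP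
    exact ((contDiff_succ_iff_deriv.mp h).2.2.differentiable (by norm_num))
  have hΨ' : deriv (fun x : ℝ => P x * E x)
      = fun y : ℝ => (deriv P y - ((y : ℂ) ^ 2 + a₁ * y + a₀) * P y) * E y := by
    funext y
    have h := ((hP1 y).hasDerivAt).mul (hEder y)
    rw [show (fun x => P x * E x) = P * E from rfl, h.deriv]
    ring
  intro x
  rw [hΨ']
  have hu : HasDerivAt (fun y : ℝ => (y : ℂ) ^ 2 + a₁ * y + a₀) (2 * (x : ℂ) + a₁) x := by
    have h1 : HasDerivAt (fun z : ℂ => z ^ 2 + a₁ * z + a₀) (2 * (x : ℂ) + a₁) (x : ℂ) := by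
      have := ((hasDerivAt_pow 2 (x : ℂ)).add ((hasDerivAt_id (x : ℂ)).const_mul a₁)).add_const a₀
      convert this using 1
      · rfl
      · rfl
      · funext z; simp
      · norm_num
    exact h1.comp_ofReal
  have hfull : HasDerivAt
      (fun y : ℝ => (deriv P y - ((y : ℂ) ^ 2 + a₁ * y + a₀) * P y) * E y)
      ((deriv (deriv P) x - ((2 * (x : ℂ) + a₁) * P x + ((x : ℂ) ^ 2 + a₁ * x + a₀) * deriv P x)) * E x
        + (deriv P x - ((x : ℂ) ^ 2 + a₁ * x + a₀) * P x) * (-((x : ℂ) ^ 2 + a₁ * x + a₀) * E x)) x := by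
    exact ((((hP2 x).hasDerivAt).sub (hu.mul ((hP1 x).hasDerivAt))).mul (hEder x))
  rw [hfull.deriv]
  have hode := hPode x
  have hq₃ : q₃ = 2 * a₁ := by rw [ha₁]; ring
  have hq₂ : q₂ = 2 * a₀ + a₁ ^ 2 := by linear_combination (-2 : ℂ) * ha₀
  have hq₁ : q₁ = b₁ + 2 * a₀ * a₁ := by rw [hb₁]; ring
  have hq₀ : q₀ = b₀ + a₀ ^ 2 + lam := by rw [hb₀]; ring
  rw [hq₃, hq₂, hq₁, hq₀]
  linear_combination (E x) * hode
end
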